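/- For all integers i, j with i ≠ 1, the elements x^{iσ,0} and x^{jδ,0} lie in the derived subalgebra B = [A,A]. -/

import Mathlib

namespace SuBlock

variable (F : Type*) [Field F]

def sigmaV : Fin 4 → F := ![1, 0, 1, 0]

def deltaV (d : F) : Fin 4 → F := ![0, 0, d, 0]

/-- The data `(Γ, J, δ)` of the paper: `δ₃ ∈ F \ {0}`, `Γ ≤ F⁴` an additive subgroup
containing `σ = (1,0,1,0)` and `δ = (0,0,δ₃,0)`, with `ker π₄ ⊄ ker π₂` whenever `π₂ ≠ 0`,
and `J_p` encoded by `m p : Bool` (`J_p = ℕ` iff `m p = true`), with `J_q ≠ {0}`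
whenever `π_q = 0`, for `q = 2,4`.  (Coordinates `1,2,3,4` are `Fin 4` indices `0,1,2,3`.) -/
structure Datum where
  d3 : F
  d3_ne : d3 ≠ 0
  Γ : AddSubgroup (Fin 4 → F)
  m : Fin 4 → Bool
  sigma_mem : sigmaV F ∈ Γ
  delta_mem : deltaV F d3 ∈ Γ
  ker_cond : (∃ α ∈ Γ, α 1 ≠ 0) → ∃ α ∈ Γ, α 3 = 0 ∧ α 1 ≠ 0
  J2_cond : (∀ α ∈ Γ, α 1 = 0) → m 1 = true
  J4_cond : (∀ α ∈ Γ, α 3 = 0) → m 3 = true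

variable {F}

/-- The monoid `J = J₁ × J₂ × J₃ × J₄ ⊆ ℕ⁴`, where `J_p = ℕ` if `m p = true` and
`J_p = {0}` otherwise. -/
def Jmon (m : Fin 4 → Bool) : AddSubmonoid (Fin 4 → ℕ) where
  carrier := {i | ∀ p, m p = false → i p = 0}
  zero_mem' := fun p _ => rfl
  add_mem' := fun ha hb p hp => by
    simp only [Set.mem_setOf_eq] at ha hb
    simp [Pi.add_apply, ha p hp, hb p hp]

/-- The commutative associative algebra `A = A(Γ,J)`, the semigroup algebra of `Γ × J`
with basis `x^{α,i}`, `(α,i) ∈ Γ × J`. -/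
abbrev Alg (D : Datum F) : Type _ := AddMonoidAlgebra F (↥D.Γ × ↥(Jmon D.m))

/-- The basis element `x^{α,i}`. -/
noncomputable def X (D : Datum F) (g : ↥D.Γ × ↥(Jmon D.m)) : Alg D :=
  AddMonoidAlgebra.single g 1

/-- `i - 1_[p]` (truncated subtraction). -/
def subE {m : Fin 4 → Bool} (i : ↥(Jmon m)) (p : Fin 4) : ↥(Jmon m) :=
  ⟨i.1 - Pi.single p 1, fun q hq => by
    have h : i.1 q = 0 := i.2 q hq
    simp only [Pi.sub_apply, h, Nat.zero_sub]⟩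

/-- `∂_p x^{α,i} = α_p x^{α,i} + i_p x^{α,i-1_[p]}` (coordinates are `Fin 4` indexed). -/
noncomputable def Dmon (D : Datum F) (p : Fin 4) (g : ↥D.Γ × ↥(Jmon D.m)) : Alg D :=
  (g.1.1 p) • X D g + ((g.2.1 p : F)) • X D (g.1, subE g.2 p)

/-- The derivation `∂_p` of `A`, extended linearly from its values on the basis. -/
noncomputable def Dop (D : Datum F) (p : Fin 4) (u : Alg D) : Alg D :=
  Finsupp.sum u.coeff fun g c => c • Dmon D p g

/-- The Lie bracket (1.6):
`[u,v] = x^{σ,0}(∂₁(u)∂₂(v) − ∂₁(v)∂₂(u)) + (x^{δ,0}∂₃(u) + u)∂₄(v) − ∂₄(u)(x^{δ,0}∂₃(v) + v)`. -/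
noncomputable def br (D : Datum F) (u v : Alg D) : Alg D :=
  X D (⟨sigmaV F, D.sigma_mem⟩, 0) * (Dop D 0 u * Dop D 1 v - Dop D 0 v * Dop D 1 u)
    + (X D (⟨deltaV F D.d3, D.delta_mem⟩, 0) * Dop D 2 u + u) * Dop D 3 v
    - Dop D 3 u * (X D (⟨deltaV F D.d3, D.delta_mem⟩, 0) * Dop D 2 v + v)

/-- The derived subalgebra `B = [A,A]`, the span of all brackets. -/
noncomputable def Bspan (D : Datum F) : Submodule F (Alg D) :=
  Submodule.span F {w | ∃ u v : Alg D, w = br D u v}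


-- AUX
lemma X_mul (D : Datum F) (g h : ↥D.Γ × ↥(Jmon D.m)) : X D g * X D h = X D (g + h) := by
  simp [X, AddMonoidAlgebra.single_mul_single]

lemma Dop_X (D : Datum F) (p : Fin 4) (g : ↥D.Γ × ↥(Jmon D.m)) :
    Dop D p (X D g) = (g.1.1 p) • X D g + ((g.2.1 p : F)) • X D (g.1, subE g.2 p) := by
  rw [Dop, X, AddMonoidAlgebra.coeff_single, Finsupp.sum_single_index (zero_smul F (Dmon D p g)), one_smul, Dmon]
  rfl

lemma Dop_X_pure (D : Datum F) (p : Fin 4) (g : ↥D.Γ) :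
    Dop D p (X D (g, 0)) = (g.1 p) • X D (g, 0) := by
  rw [Dop_X]
  simp

-- pure-pure bracket
lemma br_pure (D : Datum F) (g h : ↥D.Γ) :
    br D (X D (g, 0)) (X D (h, 0)) =
      (g.1 0 * h.1 1 - g.1 1 * h.1 0) • X D ((⟨sigmaV F, D.sigma_mem⟩ : ↥D.Γ) + g + h, 0)
      + (g.1 2 * h.1 3 - g.1 3 * h.1 2) • X D ((⟨deltaV F D.d3, D.delta_mem⟩ : ↥D.Γ) + g + h, 0)
      + (h.1 3 - g.1 3) • X D (g + h, 0) := by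
  rw [br]
  simp only [Dop_X_pure]
  simp only [smul_mul_assoc, mul_smul_comm, X_mul, smul_smul, smul_sub, smul_add,
    mul_sub, mul_add, sub_mul, add_mul, sub_smul, add_smul, Prod.mk_add_mk, add_zero, zero_add]
  have E1 : (⟨sigmaV F, D.sigma_mem⟩ : ↥D.Γ) + (g + h) = ⟨sigmaV F, D.sigma_mem⟩ + g + h :=
    (add_assoc _ _ _).symm
  have E2 : (⟨sigmaV F, D.sigma_mem⟩ : ↥D.Γ) + (h + g) = ⟨sigmaV F, D.sigma_mem⟩ + g + h := by
    rw [add_comm h g, add_assoc]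
  have E3 : g + ((⟨deltaV F D.d3, D.delta_mem⟩ : ↥D.Γ) + h) =
      ⟨deltaV F D.d3, D.delta_mem⟩ + g + h := by
    rw [add_left_comm, add_assoc]
  rw [E1, E2, E3]
  module

/-- The exponent `e₂ = (0,1,0,0) ∈ J` when `m 1 = true`. -/
def e2 {m : Fin 4 → Bool} (hm : m 1 = true) : ↥(Jmon m) :=
  ⟨Pi.single 1 1, fun q hq => by
    have : q ≠ 1 := by rintro rfl; rw [hm] at hq; simp at hq
    exact Pi.single_eq_of_ne this 1⟩

lemma subE_e2 {m : Fin 4 → Bool} (hm : m 1 = true) : subE (e2 hm) 1 = 0 := by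
  apply Subtype.ext
  funext q
  simp [subE, e2]

lemma br_sigma_e2 (D : Datum F) (hm : D.m 1 = true) (h : ↥D.Γ)
    (h1 : h.1 1 = 0) (h3 : h.1 3 = 0) :
    br D (X D (⟨sigmaV F, D.sigma_mem⟩, 0)) (X D (h, e2 hm)) =
      X D ((⟨sigmaV F, D.sigma_mem⟩ : ↥D.Γ) + ⟨sigmaV F, D.sigma_mem⟩ + h, 0) := by
  rw [br]
  simp only [Dop_X_pure, Dop_X, subE_e2]
  have t0 : sigmaV F 0 = 1 := by simp [sigmaV]
  have t1 : sigmaV F 1 = 0 := by simp [sigmaV]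
  have t2 : sigmaV F 2 = 1 := by simp [sigmaV]
  have t3 : sigmaV F 3 = 0 := by simp [sigmaV]
  have j1 : (((e2 hm).1 1 : ℕ) : F) = 1 := by simp [e2]
  have j0 : (((e2 hm).1 0 : ℕ) : F) = 0 := by simp [e2, Pi.single_eq_of_ne]
  have jtwo : (((e2 hm).1 2 : ℕ) : F) = 0 := by simp [e2, Pi.single_eq_of_ne]
  have j3 : (((e2 hm).1 3 : ℕ) : F) = 0 := by simp [e2, Pi.single_eq_of_ne]
  have z : ∀ p, ((((0 : ↥(Jmon D.m))).1 p : ℕ) : F) = 0 := by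
    intro p; simp
  simp only [t0, t1, t2, t3, j0, j1, jtwo, j3, h1, h3, z]
  simp only [zero_smul, smul_zero, one_smul, add_zero, zero_add, mul_zero, zero_mul,
    sub_zero, zero_sub, mul_one, one_mul]
  rw [X_mul, X_mul]
  congr 1
  simp only [Prod.ext_iff]
  refine ⟨Subtype.ext ?_, by simp⟩
  show sigmaV F + (sigmaV F + h.1) = sigmaV F + sigmaV F + h.1
  rw [add_assoc]

lemma br_mem (D : Datum F) (u v : Alg D) : br D u v ∈ Bspan D :=
  Submodule.subset_span ⟨u, v, rfl⟩


/-- for all integers `i ≠ 1` and all integers `j`, the elements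
`x^{iσ,0}` and `x^{jδ,0}` lie in `B = [A,A]`. -/
theorem xsigma_xdelta_mem_derived (F : Type*) [Field F] [CharZero F] (D : Datum F)
    (i j : ℤ) (hi : i ≠ 1) :
    X D (⟨i • sigmaV F, AddSubgroup.zsmul_mem D.Γ D.sigma_mem i⟩, 0) ∈ Bspan D ∧
    X D (⟨j • deltaV F D.d3, AddSubgroup.zsmul_mem D.Γ D.delta_mem j⟩, 0) ∈ Bspan D := by
  set sg : ↥D.Γ := ⟨sigmaV F, D.sigma_mem⟩ with hsg
  set dg : ↥D.Γ := ⟨deltaV F D.d3, D.delta_mem⟩ with hdg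
  have hTi : (⟨i • sigmaV F, AddSubgroup.zsmul_mem D.Γ D.sigma_mem i⟩ : ↥D.Γ) = i • sg := rfl
  have hTj : (⟨j • deltaV F D.d3, AddSubgroup.zsmul_mem D.Γ D.delta_mem j⟩ : ↥D.Γ) = j • dg := rfl
  rw [hTi, hTj]
  by_cases hm : D.m 1 = true
  · constructor
    · have key := br_sigma_e2 D hm (i • sg - sg - sg)
        (by simp [hsg, sigmaV, AddSubgroup.coe_sub]) (by simp [hsg, sigmaV, AddSubgroup.coe_sub])
      have he : sg + sg + (i • sg - sg - sg) = i • sg := by abel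
      rw [he] at key
      rw [← key]; exact br_mem D _ _
    · have key := br_sigma_e2 D hm (j • dg - sg - sg)
        (by simp [hsg, hdg, sigmaV, deltaV, AddSubgroup.coe_sub]) (by simp [hsg, hdg, sigmaV, deltaV, AddSubgroup.coe_sub])
      have he : sg + sg + (j • dg - sg - sg) = j • dg := by abel
      rw [he] at key
      rw [← key]; exact br_mem D _ _
  · have hex : ∃ α ∈ D.Γ, α 1 ≠ 0 := by
      by_contra hc
      push_neg at hc
      exact hm (D.J2_cond hc)
    obtain ⟨a, haΓ, ha3, ha1⟩ := D.ker_cond hex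
    set g : ↥D.Γ := ⟨a, haΓ⟩ with hg
    constructor
    · have key := br_pure D g (i • sg - sg - g)
      have he : sg + g + (i • sg - sg - g) = i • sg := by abel
      rw [he] at key
      have hc1 : g.1 0 * (i • sg - sg - g).1 1 - g.1 1 * (i • sg - sg - g).1 0
          = -(a 1 * ((i : F) - 1)) := by
        simp only [hg, hsg, AddSubgroup.coe_sub, AddSubgroup.coe_zsmul, Pi.sub_apply,
          Pi.smul_apply, sigmaV]
        simp
        ring
      have hc2 : g.1 2 * (i • sg - sg - g).1 3 - g.1 3 * (i • sg - sg - g).1 2 = 0 := by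
        simp only [hg, hsg, AddSubgroup.coe_sub, AddSubgroup.coe_zsmul, Pi.sub_apply,
          Pi.smul_apply, sigmaV]
        simp [ha3]
      have hc3 : (i • sg - sg - g).1 3 - g.1 3 = 0 := by
        simp only [hg, hsg, AddSubgroup.coe_sub, AddSubgroup.coe_zsmul, Pi.sub_apply,
          Pi.smul_apply, sigmaV]
        simp [ha3]
      rw [hc1, hc2, hc3, zero_smul, zero_smul, add_zero, add_zero] at key
      have hne : -(a 1 * ((i : F) - 1)) ≠ 0 := by
        have hiF : (i : F) ≠ 1 := by exact_mod_cast hi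
        exact neg_ne_zero.mpr (mul_ne_zero ha1 (sub_ne_zero.mpr hiF))
      have : X D (i • sg, 0) = (-(a 1 * ((i : F) - 1)))⁻¹ • br D (X D (g, 0)) (X D (i • sg - sg - g, 0)) := by
        rw [key, smul_smul, inv_mul_cancel₀ hne, one_smul]
      rw [this]
      exact Submodule.smul_mem _ _ (br_mem D _ _)
    · have key := br_pure D g (j • dg - sg - g)
      have he : sg + g + (j • dg - sg - g) = j • dg := by abel
      rw [he] at key
      have hc1 : g.1 0 * (j • dg - sg - g).1 1 - g.1 1 * (j • dg - sg - g).1 0 = a 1 := by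
        simp only [hg, hsg, hdg, AddSubgroup.coe_sub, AddSubgroup.coe_zsmul, Pi.sub_apply,
          Pi.smul_apply, sigmaV, deltaV]
        simp
        ring
      have hc2 : g.1 2 * (j • dg - sg - g).1 3 - g.1 3 * (j • dg - sg - g).1 2 = 0 := by
        simp only [hg, hsg, hdg, AddSubgroup.coe_sub, AddSubgroup.coe_zsmul, Pi.sub_apply,
          Pi.smul_apply, sigmaV, deltaV]
        simp [ha3]
      have hc3 : (j • dg - sg - g).1 3 - g.1 3 = 0 := by
        simp only [hg, hsg, hdg, AddSubgroup.coe_sub, AddSubgroup.coe_zsmul, Pi.sub_apply,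
          Pi.smul_apply, sigmaV, deltaV]
        simp [ha3]
      rw [hc1, hc2, hc3, zero_smul, zero_smul, add_zero, add_zero] at key
      have : X D (j • dg, 0) = (a 1)⁻¹ • br D (X D (g, 0)) (X D (j • dg - sg - g, 0)) := by
        rw [key, smul_smul, inv_mul_cancel₀ ha1, one_smul]
      rw [this]
      exact Submodule.smul_mem _ _ (br_mem D _ _)

end SuBlock
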